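/- Let p be a prime, f : ℤ_p → ℤ_p a 1-Lipschitz function, and let (k, m) and (k', m') be vertices (k, k' ≥ 0, 0 ≤ m < p^k, 0 ≤ m' < p^{k'}) with sections h and h' of f, respectively. If h = h' as functions and b^f_{m + y·p^k} = b^f_{m' + y·p^{k'}} for every integer y with 0 ≤ y < p, then b^f_{m + n·p^k} = b^f_{m' + n·p^{k'}} for every integer n ≥ 0. (In other words, the pair consisting of the section of f at a vertex v and the first-level reduced van der Put coefficients below v completely determines the section of the sequence (b^f_n) at v.) -/

import Mathlib

/-- The van der Put coefficients of `f : ℤ_p → ℤ_p`: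
`B^f_n = f(n)` for `0 ≤ n < p` and `B^f_n = f(n) - f(n mod p^⌊log_p n⌋)` for `n ≥ p`. -/
noncomputable def vdpB (p : ℕ) [Fact p.Prime] (f : PadicInt p → PadicInt p) (n : ℕ) :
    PadicInt p :=
  if n < p then f n else f n - f ((n % p ^ Nat.log p n : ℕ))

/-- `h` is the section of `f` at the vertex `(k, m)`: for some integer `0 ≤ r < p^k`,
`f(m + p^k·y) = r + p^k·h(y)` for all `y ∈ ℤ_p`. -/
def IsSection (p : ℕ) [Fact p.Prime] (f h : PadicInt p → PadicInt p) (k m : ℕ) : Prop :=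
  ∃ r : ℕ, r < p ^ k ∧ ∀ y : PadicInt p,
    f ((m : PadicInt p) + (p : PadicInt p) ^ k * y)
      = (r : PadicInt p) + (p : PadicInt p) ^ k * h y

lemma key_eq (p : ℕ) [Fact p.Prime] (f : PadicInt p → PadicInt p)
    (bf : ℕ → PadicInt p)
    (hbf : ∀ n : ℕ, (p : PadicInt p) ^ Nat.log p n * bf n = vdpB p f n)
    (k m : ℕ) (hm : m < p ^ k)
    (h : PadicInt p → PadicInt p) (hsec : IsSection p f h k m)
    (n : ℕ) (hn : p ≤ n) :
    (p : PadicInt p) ^ (k + Nat.log p n) * bf (m + n * p ^ k)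
      = (p : PadicInt p) ^ k * (h n - h ((n % p ^ Nat.log p n : ℕ))) := by
  obtain ⟨r, hr, hsecf⟩ := hsec
  have hp : p.Prime := Fact.out
  have h1 : 1 < p := hp.one_lt
  set L := Nat.log p n with hLdef
  have hn0 : n ≠ 0 := by omega
  have hL1 : p ^ L ≤ n := Nat.pow_log_le_self p hn0
  have hL2 : n < p ^ (L + 1) := Nat.lt_pow_succ_log_self h1 n
  have hpk : 0 < p ^ k := pow_pos (by omega) _
  have hpL : 0 < p ^ L := pow_pos (by omega) _
  have hlog : Nat.log p (m + n * p ^ k) = k + L := by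
    apply Nat.log_eq_of_pow_le_of_lt_pow
    · calc p ^ (k + L) = p ^ L * p ^ k := by ring
        _ ≤ n * p ^ k := Nat.mul_le_mul_right _ hL1
        _ ≤ m + n * p ^ k := Nat.le_add_left _ _
    · calc m + n * p ^ k < p ^ k + n * p ^ k := by omega
        _ = (n + 1) * p ^ k := by ring
        _ ≤ p ^ (L + 1) * p ^ k := Nat.mul_le_mul_right _ (by omega)
        _ = p ^ (k + L + 1) := by ring
  have hmodlt : n % p ^ L < p ^ L := Nat.mod_lt _ hpL
  have hdecomp : m + n * p ^ k = (m + (n % p ^ L) * p ^ k) + (n / p ^ L) * p ^ (k + L) := by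
    conv_lhs => rw [← Nat.mod_add_div n (p ^ L)]
    ring
  have hmod : (m + n * p ^ k) % p ^ (k + L) = m + (n % p ^ L) * p ^ k := by
    rw [hdecomp, Nat.add_mul_mod_self_right, Nat.mod_eq_of_lt]
    calc m + (n % p ^ L) * p ^ k < p ^ k + (n % p ^ L) * p ^ k := by omega
      _ = (n % p ^ L + 1) * p ^ k := by ring
      _ ≤ p ^ L * p ^ k := Nat.mul_le_mul_right _ (by omega)
      _ = p ^ (k + L) := by ring
  have hNp : ¬ (m + n * p ^ k < p) := by
    have := Nat.le_mul_of_pos_right n hpk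
    omega
  have H := hbf (m + n * p ^ k)
  rw [hlog] at H
  rw [H]
  unfold vdpB
  rw [if_neg hNp, hlog, hmod]
  have c1 : ((m + n * p ^ k : ℕ) : PadicInt p)
      = (m : PadicInt p) + (p : PadicInt p) ^ k * (n : ℕ) := by push_cast; ring
  have c2 : ((m + (n % p ^ L) * p ^ k : ℕ) : PadicInt p)
      = (m : PadicInt p) + (p : PadicInt p) ^ k * ((n % p ^ L : ℕ) : PadicInt p) := by
    push_cast; ring
  rw [c1, c2, hsecf, hsecf]
  ring

/-- If the sections of a 1-Lipschitz `f` at two vertices `(k, m)` and `(k', m')`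
coincide, and the first-level reduced van der Put coefficients below the two vertices
coincide, then the full sections of the coefficient sequence at the two vertices
coincide. -/
theorem section_and_first_level_determine_coefficients (p : ℕ) [Fact p.Prime]
    (f : PadicInt p → PadicInt p)
    (hf : ∀ x y : PadicInt p, ‖f x - f y‖ ≤ ‖x - y‖)
    -- `bf` is the sequence of reduced van der Put coefficients of `f`
    (bf : ℕ → PadicInt p)
    (hbf : ∀ n : ℕ, (p : PadicInt p) ^ Nat.log p n * bf n = vdpB p f n)
    (k m k' m' : ℕ) (hm : m < p ^ k) (hm' : m' < p ^ k')
    (h h' : PadicInt p → PadicInt p)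
    (hsec : IsSection p f h k m) (hsec' : IsSection p f h' k' m')
    (hhh : h = h')
    (hfirst : ∀ y : ℕ, y < p → bf (m + y * p ^ k) = bf (m' + y * p ^ k')) :
    ∀ n : ℕ, bf (m + n * p ^ k) = bf (m' + n * p ^ k') := by
  intro n
  by_cases hnp : n < p
  · exact hfirst n hnp
  · push_neg at hnp
    have H1 := key_eq p f bf hbf k m hm h hsec n hnp
    have H2 := key_eq p f bf hbf k' m' hm' h' hsec' n hnp
    rw [hhh] at H1
    have hp : p.Prime := Fact.out
    have hpne : (p : PadicInt p) ≠ 0 := Nat.cast_ne_zero.mpr hp.ne_zero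
    have e1 : (p : PadicInt p) ^ Nat.log p n * bf (m + n * p ^ k)
        = h' n - h' ((n % p ^ Nat.log p n : ℕ)) := by
      apply mul_left_cancel₀ (pow_ne_zero k hpne)
      rw [← mul_assoc, ← pow_add]
      exact H1
    have e2 : (p : PadicInt p) ^ Nat.log p n * bf (m' + n * p ^ k')
        = h' n - h' ((n % p ^ Nat.log p n : ℕ)) := by
      apply mul_left_cancel₀ (pow_ne_zero k' hpne)
      rw [← mul_assoc, ← pow_add]
      exact H2
    exact mul_left_cancel₀ (pow_ne_zero _ hpne) (e1.trans e2.symm)
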